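/- Let R be a commutative ring and M an R-module with Ann_R(M) = {0}. If the idealization R(+)M, with its Z_2-grading H_0 = R ⊕ 0 and H_1 = 0 ⊕ M, is an EM-Z_2-graded ring, then R is an EM-ring. In particular, R is an EM-ring if and only if R(+)R is an EM-Z_2-graded ring with this grading. -/

import Mathlib

open Polynomial

/-- A commutative ring `S` is an EM-ring if every zero-divisor polynomial in `S[x]`
has an annihilating content. -/
def IsEMRing (S : Type*) [CommRing S] : Prop :=
  ∀ f : S[X], f ∉ nonZeroDivisors S[X] →
    ∃ (c : S) (g : S[X]), c ∉ nonZeroDivisors S ∧ g ∈ nonZeroDivisors S[X] ∧ f = C c * g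

/-- The idealization `R(+)M` (the trivial square-zero extension), with its `Z₂`-grading
`H₀ = R ⊕ 0`, `H₁ = 0 ⊕ M`, is EM-`Z₂`-graded: every nonzero homogeneous zero-divisor
polynomial over it has an annihilating content. -/
def IsEMZ2Idealization (R M : Type*) [CommRing R] [AddCommGroup M] [Module R M]
    [Module Rᵐᵒᵖ M] [IsCentralScalar R M] : Prop :=
  ∀ f : Polynomial (TrivSqZeroExt R M), f ≠ 0 →
    ((∀ i, (f.coeff i).snd = 0) ∨ (∀ i, (f.coeff i).fst = 0)) →
    f ∉ nonZeroDivisors (Polynomial (TrivSqZeroExt R M)) →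
    ∃ (c : TrivSqZeroExt R M) (g : Polynomial (TrivSqZeroExt R M)),
      c ∉ nonZeroDivisors (TrivSqZeroExt R M) ∧
      g ∈ nonZeroDivisors (Polynomial (TrivSqZeroExt R M)) ∧
      f = C c * g

section Aux

variable {R M : Type*} [CommRing R] [AddCommGroup M] [Module R M]
    [Module Rᵐᵒᵖ M] [IsCentralScalar R M]

/-- The first-projection ring hom out of the idealization. -/
def fstRH (R M : Type*) [CommRing R] [AddCommGroup M] [Module R M]
    [Module Rᵐᵒᵖ M] [IsCentralScalar R M] : TrivSqZeroExt R M →+* R where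
  toFun := TrivSqZeroExt.fst
  map_one' := TrivSqZeroExt.fst_one
  map_mul' := TrivSqZeroExt.fst_mul
  map_zero' := TrivSqZeroExt.fst_zero (M := M)
  map_add' := TrivSqZeroExt.fst_add

@[simp] lemma fstRH_apply (x : TrivSqZeroExt R M) : fstRH R M x = x.fst := rfl

@[simp] lemma inlHom_app (r : R) :
    (TrivSqZeroExt.inlHom R M) r = TrivSqZeroExt.inl r := rfl

lemma eq_inl_of {x : TrivSqZeroExt R M} (h : x.snd = 0) : x = TrivSqZeroExt.inl x.fst :=
  TrivSqZeroExt.ext (TrivSqZeroExt.fst_inl M x.fst).symm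
    (h.trans (TrivSqZeroExt.snd_inl M x.fst).symm)

lemma eq_zero_of {x : TrivSqZeroExt R M} (h1 : x.fst = 0) (h2 : x.snd = 0) : x = 0 :=
  TrivSqZeroExt.ext (h1.trans (TrivSqZeroExt.fst_zero (R := R) (M := M)).symm)
    (h2.trans (TrivSqZeroExt.snd_zero (R := R) (M := M)).symm)

lemma inl_eq_zero {r : R} (h : (TrivSqZeroExt.inl r : TrivSqZeroExt R M) = 0) : r = 0 :=
  TrivSqZeroExt.inl_injective (h.trans (TrivSqZeroExt.inl_zero (M := M)).symm)

lemma inr_eq_zero {m : M} (h : (TrivSqZeroExt.inr m : TrivSqZeroExt R M) = 0) : m = 0 :=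
  TrivSqZeroExt.inr_injective (h.trans (TrivSqZeroExt.inr_zero (R := R)).symm)

/-- Forward direction: EM-Z2-graded idealization implies EM. -/
lemma fwd_aux (hEM : IsEMZ2Idealization R M) : IsEMRing R := by
  intro f hf
  by_cases hf0 : f = 0
  · subst hf0
    have h10 : (1 : R) ≠ 0 := by
      intro e
      apply hf
      constructor <;>
      · intro y _
        ext n
        rw [coeff_zero, ← mul_one (y.coeff n), e, mul_zero]
    refine ⟨0, 1, ?_, one_mem _, by simp⟩
    intro hmem
    exact h10 (hmem.2 1 (mul_zero 1))
  · obtain ⟨hp, hmul, hne⟩ := _root_.notMem_nonZeroDivisors_iff_right.mp hf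
    set A := TrivSqZeroExt R M
    set F : Polynomial A := f.map (TrivSqZeroExt.inlHom R M) with hFdef
    have hinj : Function.Injective (TrivSqZeroExt.inl : R → A) :=
      TrivSqZeroExt.inl_injective
    have hF0 : F ≠ 0 := by
      intro e
      exact hf0 (Polynomial.map_injective _ hinj (by simpa using e))
    have hFhom : ∀ i, (F.coeff i).snd = 0 := by
      intro i
      rw [hFdef, coeff_map, inlHom_app]
      exact TrivSqZeroExt.snd_inl M _
    have hFnzd : F ∉ nonZeroDivisors (Polynomial A) := by
      rw [_root_.notMem_nonZeroDivisors_iff_right]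
      refine ⟨hp.map (TrivSqZeroExt.inlHom R M), ?_, ?_⟩
      · rw [← Polynomial.map_mul, hmul, Polynomial.map_zero]
      · intro e
        exact hne (Polynomial.map_injective _ hinj (by simpa using e))
    obtain ⟨c, G, hc, hG, hFeq⟩ := hEM F hF0 (Or.inl hFhom) hFnzd
    set a := c.fst with ha
    set g : R[X] := G.map (fstRH R M) with hgdef
    have hcoeff : ∀ i, f.coeff i = a * (G.coeff i).fst := by
      intro i
      have h1 := congrArg (fun p : Polynomial A => (p.coeff i).fst) hFeq
      simp only [hFdef, coeff_map, coeff_C_mul] at h1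
      exact h1
    have hfg : f = C a * g := by
      ext i
      rw [coeff_C_mul, hcoeff i, hgdef, coeff_map, fstRH_apply]
    have hgreg : g ∈ nonZeroDivisors R[X] := by
      rw [Polynomial.mem_nonZeroDivisors_iff]
      intro k hk
      have hkb : ∀ i, k * (G.coeff i).fst = 0 := by
        intro i
        have h1 := congrArg (fun p : R[X] => p.coeff i) hk
        simpa [coeff_smul, smul_eq_mul, hgdef, coeff_map] using h1
      have hkn : ∀ i, k • (G.coeff i).snd = 0 := by
        intro i
        by_contra hv
        have hCv : Polynomial.C (TrivSqZeroExt.inr (k • (G.coeff i).snd) : A) * G = 0 := by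
          refine Polynomial.ext fun j => ?_
          rw [coeff_C_mul, coeff_zero]
          apply TrivSqZeroExt.ext
          · simp
          · simp only [TrivSqZeroExt.snd_mul, TrivSqZeroExt.fst_inr,
              TrivSqZeroExt.snd_inr, TrivSqZeroExt.snd_zero, zero_smul, zero_add,
              op_smul_eq_smul]
            rw [smul_smul, mul_comm ((G.coeff j).fst) k, hkb j, zero_smul]
        have := hG.2 _ hCv
        rw [Polynomial.C_eq_zero] at this
        exact hv (inr_eq_zero this)
      have hCk : Polynomial.C (TrivSqZeroExt.inl k : A) * G = 0 := by
        refine Polynomial.ext fun j => ?_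
        rw [coeff_C_mul, coeff_zero]
        apply TrivSqZeroExt.ext
        · simpa using hkb j
        · simpa [op_smul_eq_smul] using hkn j
      have := hG.2 _ hCk
      rw [Polynomial.C_eq_zero] at this
      exact inl_eq_zero this
    refine ⟨a, g, ?_, hgreg, hfg⟩
    have hfC : (hp * C a) * g = 0 := by
      rw [mul_assoc, ← hfg, hmul]
    have h2 : hp * C a = 0 := hgreg.2 _ hfC
    have hne' : ¬ ∀ n, hp.coeff n = 0 := fun h =>
      hne (Polynomial.ext fun n => (h n).trans (coeff_zero n).symm)
    obtain ⟨n, hn⟩ := not_forall.mp hne' 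
    intro hmem
    apply hn
    have h3 : hp.coeff n * a = 0 := by
      have := congrArg (fun p : R[X] => p.coeff n) h2
      simpa [coeff_mul_C] using this
    exact hmem.2 _ h3

/-- Lifting a regular polynomial over `R` to a regular polynomial over `R(+)R`. -/
lemma lift_reg {R : Type*} [CommRing R] (p : R[X]) (hp : p ∈ nonZeroDivisors R[X]) :
    p.map (TrivSqZeroExt.inlHom R R) ∈
      nonZeroDivisors (Polynomial (TrivSqZeroExt R R)) := by
  rw [Polynomial.mem_nonZeroDivisors_iff]
  intro d hd
  have hco : ∀ i, d.fst * p.coeff i = 0 ∧ p.coeff i * d.snd = 0 := by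
    intro i
    have h1 := congrArg (fun q => q.coeff i) hd
    simp only [coeff_smul, coeff_zero, coeff_map, smul_eq_mul, inlHom_app] at h1
    have h1' : d * TrivSqZeroExt.inl (p.coeff i) = 0 := h1
    constructor
    · have := congrArg TrivSqZeroExt.fst h1'
      simpa using this
    · have := congrArg TrivSqZeroExt.snd h1'
      simpa [op_smul_eq_smul, smul_eq_mul, mul_comm] using this
  have hu : d.fst = 0 := by
    refine Polynomial.mem_nonZeroDivisors_iff.mp hp d.fst ?_
    ext i
    simpa [coeff_smul, smul_eq_mul] using (hco i).1
  have hv : d.snd = 0 := by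
    refine Polynomial.mem_nonZeroDivisors_iff.mp hp d.snd ?_
    ext i
    simp only [coeff_smul, coeff_zero, smul_eq_mul]
    rw [mul_comm]
    exact (hco i).2
  exact TrivSqZeroExt.ext hu hv

/-- Backward direction: EM implies EM-Z2-graded idealization of `R(+)R`. -/
lemma bwd_aux {R : Type*} [CommRing R] (hEM : IsEMRing R) : IsEMZ2Idealization R R := by
  intro F hF0 hhom hFnzd
  set A := TrivSqZeroExt R R
  have h10 : (1 : R) ≠ 0 := by
    intro e
    apply hF0
    have hall : ∀ r : R, r = 0 := fun r => by rw [← mul_one r, e, mul_zero]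
    refine Polynomial.ext fun i => ?_
    rw [coeff_zero]
    exact eq_zero_of (hall _) (hall _)
  rcases hhom with hsnd | hfst
  · -- homogeneous of degree 0
    set f : R[X] := F.map (fstRH R R) with hfdef
    have hFf : F = f.map (TrivSqZeroExt.inlHom R R) := by
      refine Polynomial.ext fun i => ?_
      rw [coeff_map, hfdef, coeff_map, fstRH_apply, inlHom_app]
      exact eq_inl_of (hsnd i)
    have hf0 : f ≠ 0 := by
      intro e
      exact hF0 (by rw [hFf, e, Polynomial.map_zero])
    obtain ⟨d, hd0, hdF⟩ := Polynomial.notMem_nonZeroDivisors_iff.mp hFnzd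
    have hco : ∀ i, d.fst * f.coeff i = 0 ∧ f.coeff i * d.snd = 0 := by
      intro i
      have h1 := congrArg (fun q => q.coeff i) hdF
      simp only [coeff_smul, coeff_zero, smul_eq_mul] at h1
      rw [hFf] at h1
      simp only [coeff_map, inlHom_app] at h1
      have h1' : d * TrivSqZeroExt.inl (f.coeff i) = 0 := h1
      constructor
      · have := congrArg TrivSqZeroExt.fst h1'
        simpa using this
      · have := congrArg TrivSqZeroExt.snd h1'
        simpa [op_smul_eq_smul, smul_eq_mul, mul_comm] using this
    have hfnz : f ∉ nonZeroDivisors R[X] := by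
      intro hmem
      apply hd0
      have hu : d.fst = 0 := by
        refine Polynomial.mem_nonZeroDivisors_iff.mp hmem d.fst ?_
        ext i
        simpa [coeff_smul, smul_eq_mul] using (hco i).1
      have hv : d.snd = 0 := by
        refine Polynomial.mem_nonZeroDivisors_iff.mp hmem d.snd ?_
        ext i
        simp only [coeff_smul, coeff_zero, smul_eq_mul]
        rw [mul_comm]
        exact (hco i).2
      exact TrivSqZeroExt.ext hu hv
    obtain ⟨c, g, hc, hg, hfeq⟩ := hEM f hfnz
    refine ⟨TrivSqZeroExt.inl c, g.map (TrivSqZeroExt.inlHom R R), ?_, lift_reg g hg, ?_⟩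
    · obtain ⟨y, hyc, hy0⟩ := _root_.notMem_nonZeroDivisors_iff_right.mp hc
      rw [_root_.notMem_nonZeroDivisors_iff_right]
      refine ⟨TrivSqZeroExt.inl y, ?_, ?_⟩
      · show TrivSqZeroExt.inl y * TrivSqZeroExt.inl c = 0
        rw [← TrivSqZeroExt.inl_mul, hyc, TrivSqZeroExt.inl_zero]
      · intro e
        exact hy0 (inl_eq_zero e)
    · rw [hFf, hfeq, Polynomial.map_mul, Polynomial.map_C]
      rfl
  · -- homogeneous of degree 1
    set f : R[X] := ⟨AddMonoidAlgebra.ofCoeff (F.toFinsupp.coeff.mapRange TrivSqZeroExt.snd TrivSqZeroExt.snd_zero)⟩ with hfdef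
    have hcoef : ∀ i, f.coeff i = (F.coeff i).snd := by
      intro i
      rw [hfdef]
      simp [Polynomial.coeff, Finsupp.mapRange_apply]
    have hFf : F = C (TrivSqZeroExt.inr 1 : A) * f.map (TrivSqZeroExt.inlHom R R) := by
      refine Polynomial.ext fun i => ?_
      rw [coeff_C_mul, coeff_map]
      apply TrivSqZeroExt.ext
      · simpa using hfst i
      · show (F.coeff i).snd =
          (TrivSqZeroExt.inr 1 * TrivSqZeroExt.inl (f.coeff i) : A).snd
        rw [TrivSqZeroExt.snd_mul]
        simp [op_smul_eq_smul, smul_eq_mul, hcoef i]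
    by_cases hreg : f ∈ nonZeroDivisors R[X]
    · refine ⟨TrivSqZeroExt.inr 1, f.map (TrivSqZeroExt.inlHom R R), ?_, lift_reg f hreg, hFf⟩
      rw [_root_.notMem_nonZeroDivisors_iff_right]
      refine ⟨TrivSqZeroExt.inr 1, TrivSqZeroExt.inr_mul_inr R 1 1, ?_⟩
      intro e
      exact h10 (inr_eq_zero e)
    · have hf0 : f ≠ 0 := by
        intro e
        exact hF0 (by rw [hFf, e, Polynomial.map_zero, mul_zero])
      obtain ⟨c, g, hc, hg, hfeq⟩ := hEM f hreg
      have hc0 : c ≠ 0 := by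
        intro e
        exact hf0 (by rw [hfeq, e, Polynomial.C_0, zero_mul])
      refine ⟨TrivSqZeroExt.inr c, g.map (TrivSqZeroExt.inlHom R R), ?_, lift_reg g hg, ?_⟩
      · rw [_root_.notMem_nonZeroDivisors_iff_right]
        refine ⟨TrivSqZeroExt.inr c, TrivSqZeroExt.inr_mul_inr R c c, ?_⟩
        intro e
        exact hc0 (inr_eq_zero e)
      · refine Polynomial.ext fun i => ?_
        rw [coeff_C_mul, coeff_map]
        apply TrivSqZeroExt.ext
        · simpa using hfst i
        · show (F.coeff i).snd =
            (TrivSqZeroExt.inr c * TrivSqZeroExt.inl (g.coeff i) : A).snd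
          rw [TrivSqZeroExt.snd_mul]
          have : f.coeff i = c * g.coeff i := by rw [hfeq, coeff_C_mul]
          simp [op_smul_eq_smul, smul_eq_mul, ← hcoef i, this, mul_comm]

end Aux

/-- If `Ann_R(M) = 0` and the idealization `R(+)M` is EM-`Z₂`-graded (with
`H₀ = R ⊕ 0`, `H₁ = 0 ⊕ M`), then `R` is an EM-ring. In particular, `R` is an EM-ring iff
`R(+)R` is EM-`Z₂`-graded with this grading. -/
theorem stmt_19 (R M : Type*) [CommRing R] [AddCommGroup M] [Module R M]
    [Module Rᵐᵒᵖ M] [IsCentralScalar R M]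
    (hann : ∀ r : R, (∀ m : M, r • m = 0) → r = 0) :
    (IsEMZ2Idealization R M → IsEMRing R) ∧
      (IsEMRing R ↔ IsEMZ2Idealization R R) := by
  exact ⟨fwd_aux, ⟨bwd_aux, fwd_aux⟩⟩
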